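/- Under the assumptions of the two-layer construction (T > 0, c ∈ ℝ, λ > max{0,−c}), the solution u satisfies the Dirichlet-to-Neumann relation −u'(0) = f(λ)·u(0), where f(λ) = √(λ+c) · (√(λ+c) sinh(T√(λ+c)) + √λ cosh(T√(λ+c))) / (√(λ+c) cosh(T√(λ+c)) + √λ sinh(T√(λ+c))). -/

import Mathlib

/-- the two-layer decaying solution satisfies the DtN relation
−u'(0) = f(λ)·u(0) with
f(λ) = √(λ+c)(√(λ+c)sinh(T√(λ+c)) + √λ cosh(T√(λ+c))) /
       (√(λ+c)cosh(T√(λ+c)) + √λ sinh(T√(λ+c))). -/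
theorem stmt16 (T c lam u0 : ℝ) (hT : 0 < T) (hlam : max 0 (-c) < lam)
    (sc sl : ℝ) (hsc : sc = Real.sqrt (lam + c)) (hsl : sl = Real.sqrt lam)
    (α : ℝ)
    (hα : α = u0 / 2 * ((sc - sl) * Real.exp (-T * sc)) /
      (sc * Real.cosh (T * sc) + sl * Real.sinh (T * sc)))
    (β : ℝ)
    (hβ : β = (2 * α * Real.sinh (T * sc) + Real.exp (-T * sc) * u0) * Real.exp (T * sl))
    (u : ℝ → ℝ)
    (hu : ∀ x, u x = if x ≤ T then α * Real.exp (x * sc) + (u0 - α) * Real.exp (-x * sc)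
      else β * Real.exp (-x * sl)) :
    -(deriv u 0) =
      (sc * (sc * Real.sinh (T * sc) + sl * Real.cosh (T * sc)) /
        (sc * Real.cosh (T * sc) + sl * Real.sinh (T * sc))) * u 0 := by
  have hlam0 : 0 < lam := lt_of_le_of_lt (le_max_left _ _) hlam
  have hlc : 0 < lam + c := by
    have := lt_of_le_of_lt (le_max_right 0 (-c)) hlam; linarith
  have hscpos : 0 < sc := hsc ▸ Real.sqrt_pos.mpr hlc
  have hslpos : 0 < sl := hsl ▸ Real.sqrt_pos.mpr hlam0
  have hD : 0 < sc * Real.cosh (T * sc) + sl * Real.sinh (T * sc) := by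
    have h1 : 0 < Real.cosh (T * sc) := Real.cosh_pos _
    have h2 : 0 < Real.sinh (T * sc) := Real.sinh_pos_iff.mpr (by positivity)
    positivity
  -- u 0 = u0
  have hu0 : u 0 = u0 := by
    rw [hu 0, if_pos hT.le]; simp
  -- deriv u 0
  have heq : u =ᶠ[nhds (0:ℝ)] fun x => α * Real.exp (x * sc) + (u0 - α) * Real.exp (-x * sc) := by
    filter_upwards [eventually_lt_nhds hT] with x hx
    rw [hu x, if_pos hx.le]
  have hg : HasDerivAt (fun x : ℝ => α * Real.exp (x * sc) + (u0 - α) * Real.exp (-x * sc))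
      (α * (sc * Real.exp ((0:ℝ) * sc)) + (u0 - α) * (-sc * Real.exp (-(0:ℝ) * sc))) 0 := by
    have h1 : HasDerivAt (fun x : ℝ => Real.exp (x * sc)) (sc * Real.exp ((0:ℝ) * sc)) 0 := by
      have := ((hasDerivAt_id (0:ℝ)).mul_const sc).exp
      simpa using this
    have h2 : HasDerivAt (fun x : ℝ => Real.exp (-x * sc)) (-sc * Real.exp (-(0:ℝ) * sc)) 0 := by
      have := (((hasDerivAt_id (0:ℝ)).neg).mul_const sc).exp
      simpa [mul_comm] using this
    exact (h1.const_mul α).add (h2.const_mul (u0 - α))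
  have hder : deriv u 0 = (2 * α - u0) * sc := by
    rw [heq.deriv_eq, hg.deriv]
    simp; ring
  have h2a : 2 * α * (sc * Real.cosh (T * sc) + sl * Real.sinh (T * sc))
      = u0 * ((sc - sl) * Real.exp (-T * sc)) := by
    rw [hα]; field_simp
  rw [hder, hu0, div_mul_eq_mul_div, eq_div_iff hD.ne']
  rw [Real.cosh_eq, Real.sinh_eq] at h2a ⊢
  rw [show -T * sc = -(T * sc) by ring] at h2a
  linear_combination (-sc) * h2a
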